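/- Consequence of the cone covering: let y, Y_1, ..., Y_k in R^d, and suppose R^d is covered by cones C_1, ..., C_γ with vertex y and aperture π/6. If x lies in some cone C_j which contains points Y_{i_1},...,Y_{i_k} all at distance < ||x - y|| from y, then each Y_{i_l} satisfies ||Y_{i_l} - x|| < ||x - y||; hence y is not among the k nearest neighbors of x within {y, Y_1, ..., Y_k} when counting only k neighbors. -/

import Mathlib

open Real InnerProductGeometry

theorem cone_covering_knn (d k : ℕ) (y x : EuclideanSpace ℝ (Fin d))
    (Y : Fin k → EuclideanSpace ℝ (Fin d))
    (hangle : ∀ i, InnerProductGeometry.angle (Y i - y) (x - y) < π / 3)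
    (hdist : ∀ i, ‖Y i - y‖ < ‖x - y‖) :
    ∀ i, dist (Y i) x < dist y x := by
  intro i
  set u := Y i - y with hu
  set v := x - y with hv
  have hvn : 0 < ‖v‖ := lt_of_le_of_lt (norm_nonneg u) (hdist i)
  have hune : u ≠ 0 := by
    intro h
    have := hangle i
    rw [← hu, h, InnerProductGeometry.angle, inner_zero_left] at this
    simp at this
    linarith [Real.pi_pos]
  have hun : 0 < ‖u‖ := norm_pos_iff.mpr hune
  have hcos : (1 : ℝ) / 2 < Real.cos (InnerProductGeometry.angle u v) := by
    have h1 : Real.cos (π / 3) = 1 / 2 := Real.cos_pi_div_three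
    have h2 : Real.cos (π / 3) < Real.cos (InnerProductGeometry.angle u v) := by
      apply Real.strictAntiOn_cos
      · constructor
        · exact InnerProductGeometry.angle_nonneg u v
        · exact InnerProductGeometry.angle_le_pi u v
      · constructor
        · positivity
        · linarith [Real.pi_pos]
      · exact hangle i
    linarith
  have hinner : ‖u‖ * ‖v‖ / 2 < inner ℝ u v := by
    have := InnerProductGeometry.cos_angle u v
    have h3 : inner ℝ u v = Real.cos (InnerProductGeometry.angle u v) * (‖u‖ * ‖v‖) := by
      rw [this]; field_simp
    rw [h3]
    have : 1 / 2 * (‖u‖ * ‖v‖) < Real.cos (InnerProductGeometry.angle u v) * (‖u‖ * ‖v‖) := by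
      apply mul_lt_mul_of_pos_right hcos (by positivity)
    linarith
  have hsq : ‖u - v‖ ^ 2 < ‖v‖ ^ 2 := by
    have := @norm_sub_sq_real (EuclideanSpace ℝ (Fin d)) _ _ u v
    have huv : ‖u‖ * ‖u‖ ≤ ‖u‖ * ‖v‖ := by
      apply mul_le_mul_of_nonneg_left (le_of_lt (hdist i)) (norm_nonneg u)
    nlinarith [hdist i]
  have hlt : ‖u - v‖ < ‖v‖ :=
    lt_of_pow_lt_pow_left₀ 2 (norm_nonneg v) hsq
  have huv : u - v = Y i - x := by rw [hu, hv]; abel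
  rw [dist_eq_norm, dist_eq_norm, ← huv]
  calc ‖u - v‖ < ‖v‖ := hlt
    _ = ‖x - y‖ := rfl
    _ = ‖y - x‖ := norm_sub_rev x y
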